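/- Let p, q, r, m be natural numbers and let A ∈ ℝ^{p×m}, B ∈ ℝ^{q×m}, C ∈ ℝ^{r×m} be real matrices with the same number m of columns. Then the vertically stacked matrix [A; B; C] ∈ ℝ^{(p+q+r)×m} satisfies ‖[A; B; C]‖_* ≤ ‖[A; C]‖_* + ‖[B; C]‖_*, where [A; C] ∈ ℝ^{(p+r)×m} and [B; C] ∈ ℝ^{(q+r)×m} are the corresponding vertical stackings. -/

import Mathlib

/-- The positive semidefinite square root of a positive semidefinite matrix
(the former `Matrix.PosSemidef.sqrt`, spelled out with its old definition). -/
noncomputable def Matrix.PosSemidef.sqrt {n : Type*} [Fintype n] [DecidableEq n]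
    {A : Matrix n n ℝ} (hA : A.PosSemidef) : Matrix n n ℝ :=
  (hA.1.eigenvectorUnitary : Matrix n n ℝ) *
    Matrix.diagonal (fun i => Real.sqrt (hA.1.eigenvalues i)) *
    (star hA.1.eigenvectorUnitary : Matrix n n ℝ)

namespace Matrix.PosSemidef

lemma posSemidef_sqrt {n : Type*} [Fintype n] [DecidableEq n]
    {A : Matrix n n ℝ} (hA : A.PosSemidef) : hA.sqrt.PosSemidef := by
  have hD : (Matrix.diagonal (fun i => Real.sqrt (hA.1.eigenvalues i))).PosSemidef :=
    Matrix.posSemidef_diagonal_iff.mpr fun i => Real.sqrt_nonneg _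
  have := hD.conjTranspose_mul_mul_same (star hA.1.eigenvectorUnitary : Matrix n n ℝ)
  simpa [Matrix.PosSemidef.sqrt, Matrix.star_eq_conjTranspose] using this

lemma sqrt_mul_self {n : Type*} [Fintype n] [DecidableEq n]
    {A : Matrix n n ℝ} (hA : A.PosSemidef) : hA.sqrt * hA.sqrt = A := by
  set U : Matrix n n ℝ := (hA.1.eigenvectorUnitary : Matrix n n ℝ) with hU
  have hUU : (star hA.1.eigenvectorUnitary : Matrix n n ℝ) * U = 1 :=
    Unitary.coe_star_mul_self _
  have hDD : Matrix.diagonal (fun i => Real.sqrt (hA.1.eigenvalues i)) *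
      Matrix.diagonal (fun i => Real.sqrt (hA.1.eigenvalues i)) =
      Matrix.diagonal (fun i => hA.1.eigenvalues i) := by
    rw [Matrix.diagonal_mul_diagonal]
    congr 1; funext i; exact Real.mul_self_sqrt (hA.eigenvalues_nonneg i)
  have hspec := hA.1.spectral_theorem
  rw [Unitary.conjStarAlgAut_apply] at hspec
  unfold Matrix.PosSemidef.sqrt
  rw [show U * Matrix.diagonal (fun i => Real.sqrt (hA.1.eigenvalues i)) *
      (star hA.1.eigenvectorUnitary : Matrix n n ℝ) *
      (U * Matrix.diagonal (fun i => Real.sqrt (hA.1.eigenvalues i)) *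
      (star hA.1.eigenvectorUnitary : Matrix n n ℝ)) =
      U * (Matrix.diagonal (fun i => Real.sqrt (hA.1.eigenvalues i)) *
      ((star hA.1.eigenvectorUnitary : Matrix n n ℝ) * U) *
      Matrix.diagonal (fun i => Real.sqrt (hA.1.eigenvalues i))) *
      (star hA.1.eigenvectorUnitary : Matrix n n ℝ) by simp only [Matrix.mul_assoc],
    hUU, Matrix.mul_one, hDD]
  conv_rhs => rw [hspec]
  rfl

end Matrix.PosSemidef

section Helpers
open Matrix
variable {n : Type*} [Fintype n] [DecidableEq n]

lemma my_trace_nonneg {M : Matrix n n ℝ} (hM : M.PosSemidef) : 0 ≤ M.trace := by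
  rw [Matrix.trace]
  refine Finset.sum_nonneg fun i _ => ?_
  exact hM.diag_nonneg

lemma my_trace_mul_nonneg {M N : Matrix n n ℝ} (hM : M.PosSemidef) (hN : N.PosSemidef) :
    0 ≤ (M * N).trace := by
  set W := hM.sqrt with hW
  have h1 : M * N = W * (W * N) := by rw [← Matrix.mul_assoc, hM.sqrt_mul_self]
  have h2 : (M * N).trace = (Wᴴ * N * W).trace := by
    rw [h1, Matrix.trace_mul_comm, hM.posSemidef_sqrt.1, Matrix.mul_assoc]
  rw [h2]
  exact my_trace_nonneg (hN.conjTranspose_mul_mul_same W)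

lemma my_trace_mul_mono {M N P : Matrix n n ℝ} (hP : P.PosSemidef)
    (h : (N - M).PosSemidef) : (M * P).trace ≤ (N * P).trace := by
  have := my_trace_mul_nonneg h hP
  rw [Matrix.sub_mul, Matrix.trace_sub] at this
  linarith

lemma my_transpose_eq {M : Matrix n n ℝ} (h : M.IsHermitian) : Mᵀ = M := by
  simpa using h.eq

lemma my_cs (P Q : Matrix n n ℝ) :
    2 * (P * Q).trace ≤ (P * Pᵀ).trace + (Qᵀ * Q).trace := by
  have h1 : (P * Q).trace = ∑ i, ∑ j, P i j * Q j i := by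
    simp [Matrix.trace, Matrix.diag, Matrix.mul_apply]
  have h2 : (P * Pᵀ).trace = ∑ i, ∑ j, P i j ^ 2 := by
    simp [Matrix.trace, Matrix.diag, Matrix.mul_apply, sq]
  have h3 : (Qᵀ * Q).trace = ∑ i, ∑ j, Q j i ^ 2 := by
    simp [Matrix.trace, Matrix.diag, Matrix.mul_apply, sq]
  rw [h1, h2, h3, Finset.mul_sum, ← Finset.sum_add_distrib]
  refine Finset.sum_le_sum fun i _ => ?_
  rw [Finset.mul_sum, ← Finset.sum_add_distrib]
  refine Finset.sum_le_sum fun j _ => ?_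
  have := two_mul_le_add_sq (P i j) (Q j i)
  linarith

lemma my_upper {X T : Matrix n n ℝ} (hX : X.PosSemidef) (hT : T.PosDef) :
    2 * hX.sqrt.trace ≤ (X * T⁻¹).trace + T.trace := by
  set W := hX.sqrt with hWdef
  set S := hT.posSemidef.sqrt with hSdef
  have hSS : S * S = T := hT.posSemidef.sqrt_mul_self
  have hWT : Wᵀ = W := my_transpose_eq hX.posSemidef_sqrt.1
  have hST : Sᵀ = S := my_transpose_eq hT.posSemidef.posSemidef_sqrt.1
  have hdet : IsUnit S.det := by
    have h1 : S.det * S.det = T.det := by rw [← Matrix.det_mul, hSS]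
    have h2 : (0:ℝ) < T.det := hT.det_pos
    refine isUnit_iff_ne_zero.mpr fun h => ?_
    rw [h, mul_zero] at h1; linarith
  have hRS : S⁻¹ * S = 1 := Matrix.nonsing_inv_mul S hdet
  have hTinv : T⁻¹ = S⁻¹ * S⁻¹ := by rw [← hSS, Matrix.mul_inv_rev]
  have htrW : W.trace = ((W * S⁻¹) * S).trace := by
    rw [Matrix.mul_assoc, hRS, Matrix.mul_one]
  have key := my_cs (W * S⁻¹) S
  have e1 : ((W * S⁻¹) * (W * S⁻¹)ᵀ).trace = (X * T⁻¹).trace := by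
    rw [Matrix.transpose_mul, hWT, Matrix.transpose_nonsing_inv, hST]
    rw [show (W * S⁻¹) * (S⁻¹ * W) = ((W * S⁻¹) * S⁻¹) * W by
      simp only [Matrix.mul_assoc]]
    rw [Matrix.trace_mul_comm, hTinv]
    rw [show W * (W * S⁻¹ * S⁻¹) = (W * W) * (S⁻¹ * S⁻¹) by simp only [Matrix.mul_assoc]]
    rw [hX.sqrt_mul_self]
  have e2 : (Sᵀ * S).trace = T.trace := by rw [hST, hSS]
  rw [htrW]
  rw [e1, e2] at key
  exact key

lemma my_lower {X T : Matrix n n ℝ} (hX : X.PosSemidef) (hT : T.PosDef)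
    (hle : (T - hX.sqrt).PosSemidef) : (X * T⁻¹).trace ≤ hX.sqrt.trace := by
  set W := hX.sqrt with hWdef
  set S := hT.posSemidef.sqrt with hSdef
  set R := S⁻¹ with hRdef
  have hWpsd : W.PosSemidef := hX.posSemidef_sqrt
  have hSS : S * S = T := hT.posSemidef.sqrt_mul_self
  have hdet : IsUnit S.det := by
    have h1 : S.det * S.det = T.det := by rw [← Matrix.det_mul, hSS]
    have h2 : (0:ℝ) < T.det := hT.det_pos
    refine isUnit_iff_ne_zero.mpr fun h => ?_
    rw [h, mul_zero] at h1; linarith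
  have hRS : R * S = 1 := Matrix.nonsing_inv_mul S hdet
  have hSR : S * R = 1 := Matrix.mul_nonsing_inv S hdet
  have hTinv : T⁻¹ = R * R := by rw [hRdef, ← hSS, Matrix.mul_inv_rev]
  have hRH : Rᴴ = R := by
    rw [hRdef, Matrix.conjTranspose_nonsing_inv, hT.posSemidef.posSemidef_sqrt.1.eq]
  set C := R * W * R with hCdef
  have hC : C.PosSemidef := by
    have h := hWpsd.conjTranspose_mul_mul_same R
    rwa [hRH] at h
  have hRTR : R * T * R = 1 := by
    rw [← hSS, show R * (S * S) * R = (R * S) * (S * R) by simp only [Matrix.mul_assoc],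
      hRS, hSR, Matrix.one_mul]
  have hIC : (1 - C).PosSemidef := by
    have h1 : Rᴴ * (T - W) * R = 1 - C := by
      rw [hRH, Matrix.mul_sub, Matrix.sub_mul, hRTR, hCdef]
    exact h1 ▸ hle.conjTranspose_mul_mul_same R
  set D := hC.sqrt with hDdef
  have hDD : D * D = C := hC.sqrt_mul_self
  have hDH : Dᴴ = D := hC.posSemidef_sqrt.1.eq
  have hC2 : (C - C * C).PosSemidef := by
    have h2 : Dᴴ * (1 - C) * D = C - C * C := by
      rw [hDH, Matrix.mul_sub, Matrix.sub_mul, Matrix.mul_one, hDD, ← hDD,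
        show D * (D * D) * D = (D * D) * (D * D) by simp only [Matrix.mul_assoc]]
    exact h2 ▸ hIC.conjTranspose_mul_mul_same D
  have hCT : C * T = R * W * S := by
    rw [hCdef, ← hSS, show R * W * R * (S * S) = R * W * ((R * S) * S) by
      simp only [Matrix.mul_assoc], hRS, Matrix.one_mul]
  have t2 : (C * T).trace = W.trace := by
    rw [hCT, Matrix.trace_mul_cycle, hSR, Matrix.one_mul]
  have t1 : (X * T⁻¹).trace = ((C * C) * T).trace := by
    have hCCT : (C * C) * T = R * (W * (R * R) * W * S) := by
      rw [Matrix.mul_assoc C C T, hCT, hCdef]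
      simp only [Matrix.mul_assoc]
    have s1 : (R * (W * (R * R) * W * S)).trace = (W * (R * R) * W * (S * R)).trace := by
      rw [Matrix.trace_mul_comm R, show W * (R * R) * W * S * R = W * (R * R) * W * (S * R) by
        simp only [Matrix.mul_assoc]]
    have s2 : (W * (R * R) * W).trace = (X * T⁻¹).trace := by
      rw [Matrix.trace_mul_comm, show W * (W * (R * R)) = (W * W) * (R * R) by
        simp only [Matrix.mul_assoc], hX.sqrt_mul_self, hTinv]
    rw [hCCT, s1, hSR, Matrix.mul_one, s2]
  calc (X * T⁻¹).trace = ((C * C) * T).trace := t1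
    _ ≤ (C * T).trace := my_trace_mul_mono hT.posSemidef hC2
    _ = W.trace := t2

lemma my_eps_pd (δ : ℝ) (hδ : 0 < δ) : ((δ • 1 : Matrix n n ℝ)).PosDef := by
  rw [Matrix.smul_one_eq_diagonal]
  exact Matrix.posDef_diagonal_iff.mpr fun i => hδ

lemma my_delta_facts (ε : ℝ) (hε : 0 < ε) :
    0 < ε / ((Fintype.card n : ℝ) + 1) ∧
      ε / ((Fintype.card n : ℝ) + 1) * (Fintype.card n : ℝ) ≤ ε := by
  have hc : (0:ℝ) ≤ (Fintype.card n : ℝ) := Nat.cast_nonneg _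
  constructor
  · positivity
  · rw [div_mul_eq_mul_div, div_le_iff₀ (by linarith)]
    nlinarith

lemma my_subadd {P Q : Matrix n n ℝ} (hP : P.PosSemidef) (hQ : Q.PosSemidef)
    (hPQ : (P + Q).PosSemidef) :
    hPQ.sqrt.trace ≤ hP.sqrt.trace + hQ.sqrt.trace := by
  refine le_of_forall_pos_le_add fun ε hε => ?_
  obtain ⟨hδ, hδc⟩ := my_delta_facts (n := n) ε hε
  set δ := ε / ((Fintype.card n : ℝ) + 1) with hδdef
  have hδpd := my_eps_pd (n := n) δ hδ
  set T : Matrix n n ℝ := hP.sqrt + hQ.sqrt + δ • 1 with hTdef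
  have hT : T.PosDef :=
    Matrix.PosDef.posSemidef_add (hP.posSemidef_sqrt.add hQ.posSemidef_sqrt) hδpd
  have hup := my_upper hPQ hT
  have hsplit : ((P + Q) * T⁻¹).trace = (P * T⁻¹).trace + (Q * T⁻¹).trace := by
    rw [Matrix.add_mul, Matrix.trace_add]
  have hlowP : (P * T⁻¹).trace ≤ hP.sqrt.trace := by
    refine my_lower hP hT ?_
    have : T - hP.sqrt = hQ.sqrt + δ • 1 := by rw [hTdef]; abel
    rw [this]
    exact hQ.posSemidef_sqrt.add hδpd.posSemidef
  have hlowQ : (Q * T⁻¹).trace ≤ hQ.sqrt.trace := by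
    refine my_lower hQ hT ?_
    have : T - hQ.sqrt = hP.sqrt + δ • 1 := by rw [hTdef]; abel
    rw [this]
    exact hP.posSemidef_sqrt.add hδpd.posSemidef
  have htrT : T.trace = hP.sqrt.trace + hQ.sqrt.trace + δ * (Fintype.card n : ℝ) := by
    rw [hTdef, Matrix.trace_add, Matrix.trace_add, Matrix.trace_smul, Matrix.trace_one]
    simp [smul_eq_mul]
  rw [hsplit, htrT] at hup
  linarith

lemma my_mono {X Y : Matrix n n ℝ} (hX : X.PosSemidef) (hY : Y.PosSemidef)
    (h : (Y - X).PosSemidef) : hX.sqrt.trace ≤ hY.sqrt.trace := by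
  refine le_of_forall_pos_le_add fun ε hε => ?_
  obtain ⟨hδ, hδc⟩ := my_delta_facts (n := n) ε hε
  set δ := ε / ((Fintype.card n : ℝ) + 1) with hδdef
  have hδpd := my_eps_pd (n := n) δ hδ
  set T : Matrix n n ℝ := hY.sqrt + δ • 1 with hTdef
  have hT : T.PosDef := Matrix.PosDef.posSemidef_add hY.posSemidef_sqrt hδpd
  have hup := my_upper hX hT
  have hmono : (X * T⁻¹).trace ≤ (Y * T⁻¹).trace :=
    my_trace_mul_mono hT.inv.posSemidef h
  have hlow : (Y * T⁻¹).trace ≤ hY.sqrt.trace := by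
    refine my_lower hY hT ?_
    have : T - hY.sqrt = δ • 1 := by rw [hTdef]; abel
    rw [this]
    exact hδpd.posSemidef
  have htrT : T.trace = hY.sqrt.trace + δ * (Fintype.card n : ℝ) := by
    rw [hTdef, Matrix.trace_add, Matrix.trace_smul, Matrix.trace_one]
    simp [smul_eq_mul]
  rw [htrT] at hup
  linarith

lemma my_congr {M N : Matrix n n ℝ} (h : M = N) (hM : M.PosSemidef) (hN : N.PosSemidef) :
    hM.sqrt.trace = hN.sqrt.trace := by subst h; rfl

lemma my_main {X Y Z : Matrix n n ℝ} (hX : X.PosSemidef) (hY : Y.PosSemidef)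
    (hZ : Z.PosSemidef) (hS : (X + (Y + Z)).PosSemidef)
    (hXZ : (X + Z).PosSemidef) (hYZ : (Y + Z).PosSemidef) :
    hS.sqrt.trace ≤ hXZ.sqrt.trace + hYZ.sqrt.trace := by
  have hsum : X + (Y + Z) = (X + Z) + Y := by abel
  have h1 := my_congr hsum hS (hXZ.add hY)
  have h2 := my_subadd hXZ hY (hXZ.add hY)
  have h3 : hY.sqrt.trace ≤ hYZ.sqrt.trace := by
    refine my_mono hY hYZ ?_
    have : Y + Z - Y = Z := by abel
    rw [this]; exact hZ
  linarith

end Helpers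

/-- The nuclear norm of a real matrix `M`: the trace of the positive
semidefinite square root of `Mᵀ * M`. -/
noncomputable def nuclearNorm {m n : Type*} [Fintype m] [Fintype n] [DecidableEq n]
    (M : Matrix m n ℝ) : ℝ :=
  (Matrix.posSemidef_conjTranspose_mul_self M).sqrt.trace

open Matrix in
theorem nuclearNorm_fromRows_triple_le (p q r m : ℕ)
    (A : Matrix (Fin p) (Fin m) ℝ) (B : Matrix (Fin q) (Fin m) ℝ)
    (C : Matrix (Fin r) (Fin m) ℝ) :
    nuclearNorm (Matrix.fromRows A (Matrix.fromRows B C)) ≤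
      nuclearNorm (Matrix.fromRows A C) + nuclearNorm (Matrix.fromRows B C) := by
  set X := Aᴴ * A with hXdef
  set Y := Bᴴ * B with hYdef
  set Z := Cᴴ * C with hZdef
  have hX : X.PosSemidef := Matrix.posSemidef_conjTranspose_mul_self A
  have hY : Y.PosSemidef := Matrix.posSemidef_conjTranspose_mul_self B
  have hZ : Z.PosSemidef := Matrix.posSemidef_conjTranspose_mul_self C
  have g1 : (Matrix.fromRows A (Matrix.fromRows B C))ᴴ * Matrix.fromRows A (Matrix.fromRows B C)
      = X + (Y + Z) := by
    rw [Matrix.conjTranspose_fromRows_eq_fromCols_conjTranspose,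
      Matrix.fromCols_mul_fromRows,
      Matrix.conjTranspose_fromRows_eq_fromCols_conjTranspose,
      Matrix.fromCols_mul_fromRows]
  have g2 : (Matrix.fromRows A C)ᴴ * Matrix.fromRows A C = X + Z := by
    rw [Matrix.conjTranspose_fromRows_eq_fromCols_conjTranspose,
      Matrix.fromCols_mul_fromRows]
  have g3 : (Matrix.fromRows B C)ᴴ * Matrix.fromRows B C = Y + Z := by
    rw [Matrix.conjTranspose_fromRows_eq_fromCols_conjTranspose,
      Matrix.fromCols_mul_fromRows]
  unfold nuclearNorm
  rw [my_congr g1 _ (g1 ▸ Matrix.posSemidef_conjTranspose_mul_self _),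
    my_congr g2 _ (g2 ▸ Matrix.posSemidef_conjTranspose_mul_self _),
    my_congr g3 _ (g3 ▸ Matrix.posSemidef_conjTranspose_mul_self _)]
  exact my_main hX hY hZ _ _ _
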